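/- Let a, b, c be real numbers with a > 1 and b < c. There is no nonzero polynomial p in two variables with real coefficients (p : MvPolynomial (Fin 2) ℝ, p ≠ 0) such that p(x, a^x) = 0 for all x ∈ [b, c]; that is, the function x ↦ a^x (Real.rpow) is not algebraic on any nondegenerate interval. -/

import Mathlib

open Polynomial Filter Real Finset

lemma tendsto_poly_mul_exp_atBot (q : Polynomial ℝ) {s : ℝ} (hs : 0 < s) :
    Tendsto (fun x : ℝ => q.eval x * Real.exp (s * x)) atBot (nhds 0) := by
  have hmap : (atBot : Filter ℝ) = Filter.map Neg.neg atTop := by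
    rw [Filter.map_neg_atTop]
  rw [hmap, tendsto_map'_iff]
  have base : ∀ i : ℕ, Tendsto (fun y : ℝ => (-y) ^ i * Real.exp (s * -y)) atTop (nhds 0) := by
    intro i
    have h1 : Tendsto (fun y : ℝ => s * y) atTop atTop :=
      Tendsto.const_mul_atTop hs tendsto_id
    have h2 := (Real.tendsto_pow_mul_exp_neg_atTop_nhds_zero i).comp h1
    have h3 := h2.const_mul (((-1 : ℝ)) ^ i / s ^ i)
    rw [mul_zero] at h3
    convert h3 using 2 with y
    simp only [Function.comp]
    rw [neg_pow, mul_pow]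
    field_simp
  have key : (fun y : ℝ => q.eval (-y) * Real.exp (s * -y)) =
      fun y : ℝ => ∑ i ∈ Finset.range (q.natDegree + 1),
        q.coeff i * ((-y) ^ i * Real.exp (s * -y)) := by
    funext y
    rw [Polynomial.eval_eq_sum_range, Finset.sum_mul]
    exact Finset.sum_congr rfl fun i _ => by ring
  have hco : ((fun x : ℝ => q.eval x * Real.exp (s * x)) ∘ Neg.neg) =
      fun y : ℝ => q.eval (-y) * Real.exp (s * -y) := rfl
  rw [hco, key]
  have := tendsto_finset_sum (Finset.range (q.natDegree + 1))
    (fun i _ => ((base i).const_mul (q.coeff i)))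
  simpa using this

lemma poly_eq_zero_of_tendsto_atBot (q : Polynomial ℝ)
    (h : Tendsto (fun x : ℝ => q.eval x) atBot (nhds 0)) : q = 0 := by
  set r : Polynomial ℝ := q.comp (-X) with hr
  have hrev : ∀ y : ℝ, r.eval y = q.eval (-y) := by
    intro y; simp [hr]
  have hrt : Tendsto (fun y : ℝ => r.eval y) atTop (nhds 0) := by
    have := h.comp tendsto_neg_atTop_atBot
    simpa [Function.comp_def, hrev] using this
  have hr0 : r = 0 := by
    by_contra hne
    rcases eq_or_lt_of_le (Nat.zero_le r.natDegree) with hd | hd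
    · have : r = C (r.coeff 0) := Polynomial.eq_C_of_natDegree_le_zero (le_of_eq hd.symm)
      rw [this] at hrt
      simp only [Polynomial.eval_C] at hrt
      have hc : r.coeff 0 = 0 :=
        tendsto_nhds_unique (f := fun _ : ℝ => r.coeff 0) (l := atTop) tendsto_const_nhds hrt
      exact hne (by rw [this, hc, map_zero])
    · have hdeg : 0 < r.degree := by
        rwa [Polynomial.natDegree_pos_iff_degree_pos] at hd
      have habs := Polynomial.abs_tendsto_atTop r hdeg
      exact not_tendsto_nhds_of_tendsto_atTop habs 0 (by simpa using hrt.abs)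
  apply Polynomial.funext
  intro x
  have : q.eval x = r.eval (-x) := by rw [hrev, neg_neg]
  rw [this, hr0]
  simp

lemma exp_poly_zero {t : ℝ} (ht : 0 < t) :
    ∀ n (P : Polynomial (Polynomial ℝ)), P.natDegree ≤ n →
      (∀ x : ℝ, (P.map (Polynomial.evalRingHom x)).eval (Real.exp (t * x)) = 0) → P = 0 := by
  intro n
  induction n with
  | zero =>
    intro P hdeg hval
    have hc0 : P.coeff 0 = 0 := by
      apply poly_eq_zero_of_tendsto_atBot
      have hP : P = C (P.coeff 0) := Polynomial.eq_C_of_natDegree_le_zero hdeg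
      have hz : ∀ x : ℝ, (P.coeff 0).eval x = 0 := by
        intro x
        have := hval x
        rw [hP] at this
        simpa using this
      simpa [hz] using tendsto_const_nhds (f := atBot (α := ℝ)) (a := (0:ℝ))
    rw [Polynomial.eq_C_of_natDegree_le_zero hdeg, hc0, map_zero]
  | succ n ih =>
    intro P hdeg hval
    -- sum form
    have hsum : ∀ x : ℝ, ∑ i ∈ Finset.range (P.natDegree + 1),
        (P.coeff i).eval x * Real.exp (t * x) ^ i = 0 := by
      intro x
      have hlt : (P.map (Polynomial.evalRingHom x)).natDegree < P.natDegree + 1 :=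
        Nat.lt_succ_of_le Polynomial.natDegree_map_le
      have := hval x
      rw [Polynomial.eval_eq_sum_range' hlt] at this
      simpa [Polynomial.coeff_map] using this
    have hc0 : P.coeff 0 = 0 := by
      apply poly_eq_zero_of_tendsto_atBot
      have hexpr : ∀ x : ℝ, (P.coeff 0).eval x =
          -∑ i ∈ Finset.range P.natDegree,
            (P.coeff (i + 1)).eval x * Real.exp (t * x) ^ (i + 1) := by
        intro x
        have := hsum x
        rw [Finset.sum_range_succ'] at this
        simp only [pow_zero, mul_one] at this
        linarith
      have hterm : ∀ i : ℕ, Tendsto (fun x : ℝ =>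
          (P.coeff (i + 1)).eval x * Real.exp (t * x) ^ (i + 1)) atBot (nhds 0) := by
        intro i
        have hs : (0 : ℝ) < ((i : ℝ) + 1) * t := by positivity
        have := tendsto_poly_mul_exp_atBot (P.coeff (i + 1)) hs
        convert this using 2 with x
        rw [← Real.exp_nat_mul]
        push_cast
        ring_nf
      have hsumt : Tendsto (fun x : ℝ => -∑ i ∈ Finset.range P.natDegree,
          (P.coeff (i + 1)).eval x * Real.exp (t * x) ^ (i + 1)) atBot (nhds 0) := by
        have := (tendsto_finset_sum (Finset.range P.natDegree)
          (fun i _ => hterm i)).neg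
        simpa using this
      exact hsumt.congr fun x => (hexpr x).symm
    have hP : P = X * P.divX := by
      have := Polynomial.X_mul_divX_add P
      rw [hc0] at this
      simpa using this.symm
    have hQdeg : P.divX.natDegree ≤ n := by
      rw [Polynomial.natDegree_divX_eq_natDegree_tsub_one]
      omega
    have hQval : ∀ x : ℝ, ((P.divX).map (Polynomial.evalRingHom x)).eval (Real.exp (t * x)) = 0 := by
      intro x
      have := hval x
      rw [hP, Polynomial.map_mul, Polynomial.map_X, Polynomial.eval_mul, Polynomial.eval_X] at this
      exact (mul_eq_zero.mp this).resolve_left (Real.exp_ne_zero _)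
    have : P.divX = 0 := ih P.divX hQdeg hQval
    rw [hP, this, mul_zero]

/-- For real `a > 1` and `b < c`, there is no nonzero two-variable real polynomial `p`
with `p(x, a^x) = 0` for all `x ∈ [b, c]`: the function `x ↦ a^x` is not algebraic on
any nondegenerate interval. -/
theorem rpow_not_algebraic_on_interval (a b c : ℝ) (ha : 1 < a) (hbc : b < c) :
    ¬ ∃ p : MvPolynomial (Fin 2) ℝ, p ≠ 0 ∧
        ∀ x ∈ Set.Icc b c, MvPolynomial.eval ![x, Real.rpow a x] p = 0 := by
  rintro ⟨p, hp0, hvan⟩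
  have ha0 : (0 : ℝ) < a := lt_trans zero_lt_one ha
  set t := Real.log a with htdef
  have ht : 0 < t := Real.log_pos ha
  have hrw : ∀ x : ℝ, Real.rpow a x = Real.exp (t * x) := fun x =>
    Real.rpow_def_of_pos ha0 x
  -- the function is analytic on ℝ
  set F : ℝ → ℝ := fun x => MvPolynomial.eval ![x, Real.rpow a x] p with hF
  have hFanal : AnalyticOnNhd ℝ F Set.univ := by
    have hcomp : ∀ i : Fin 2, AnalyticOnNhd ℝ (fun x : ℝ => ![x, Real.rpow a x] i) Set.univ := by
      intro i
      fin_cases i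
      · simpa using (analyticOnNhd_id : AnalyticOnNhd ℝ (fun x : ℝ => x) Set.univ)
      · simp only [Matrix.cons_val_one, Matrix.head_cons]
        have : AnalyticOnNhd ℝ (fun x : ℝ => Real.exp (t * x)) Set.univ :=
          ((analyticOnNhd_const (v := t)).mul analyticOnNhd_id).rexp
        exact AnalyticOnNhd.congr isOpen_univ this (fun x _ => (hrw x).symm)
    have := AnalyticOnNhd.aeval_mvPolynomial (f := fun (x : ℝ) (i : Fin 2) => ![x, Real.rpow a x] i)
      (fun i => hcomp i) p
    refine AnalyticOnNhd.congr isOpen_univ this fun x _ => ?_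
    show MvPolynomial.eval _ p = MvPolynomial.aeval _ p
    rw [← MvPolynomial.coe_aeval_eq_eval]
    rfl
  -- F vanishes everywhere by analytic continuation
  have hFzero : ∀ x : ℝ, F x = 0 := by
    have hfreq : ∃ᶠ z in nhdsWithin b {b}ᶜ, F z = 0 := by
      have hev : ∀ᶠ z in nhdsWithin b (Set.Ioi b), F z = 0 := by
        filter_upwards [Ioc_mem_nhdsGT_of_mem ⟨le_refl b, hbc⟩] with z hz
        exact hvan z ⟨le_of_lt hz.1, hz.2⟩
      exact (hev.frequently).filter_mono
        (nhdsWithin_mono b (fun z hz => ne_of_gt hz))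
    have := hFanal.eqOn_zero_of_preconnected_of_frequently_eq_zero
      isPreconnected_univ (Set.mem_univ b) hfreq
    intro x
    exact this (Set.mem_univ x)
  -- transfer to Polynomial (Polynomial ℝ)
  set p' : MvPolynomial (Fin 2) ℝ := MvPolynomial.rename (Equiv.swap (0 : Fin 2) 1) p with hp'
  set ψ : MvPolynomial (Fin 1) ℝ →+* Polynomial ℝ :=
    (MvPolynomial.eval₂Hom (Polynomial.C : ℝ →+* Polynomial ℝ) (fun _ => Polynomial.X)) with hψ
  set P : Polynomial (Polynomial ℝ) :=
    ((MvPolynomial.finSuccEquiv ℝ 1) p').map ψ with hPdef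
  have hcomm : ∀ x : ℝ, (Polynomial.evalRingHom x).comp ψ =
      (MvPolynomial.eval ![x] : MvPolynomial (Fin 1) ℝ →+* ℝ) := by
    intro x
    apply MvPolynomial.ringHom_ext
    · intro r; simp [hψ]
    · intro i
      have : i = 0 := Subsingleton.elim i 0
      subst this
      simp [hψ]
  have hPval : ∀ x : ℝ, (P.map (Polynomial.evalRingHom x)).eval (Real.exp (t * x)) = 0 := by
    intro x
    rw [hPdef, Polynomial.map_map, hcomm x]
    have h1 : Polynomial.eval (Real.rpow a x)
        (Polynomial.map (MvPolynomial.eval ![x]) ((MvPolynomial.finSuccEquiv ℝ 1) p')) =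
        MvPolynomial.eval (Fin.cons (Real.rpow a x) ![x]) p' :=
      (MvPolynomial.eval_eq_eval_mv_eval' ![x] (Real.rpow a x) p').symm
    have h2 : (Fin.cons (Real.rpow a x) ![x] : Fin 2 → ℝ) = ![Real.rpow a x, x] := rfl
    have h3 : MvPolynomial.eval ![Real.rpow a x, x] p' = F x := by
      rw [hp', MvPolynomial.eval_rename]
      have hvec : (![Real.rpow a x, x] ∘ (Equiv.swap (0 : Fin 2) 1)) = ![x, Real.rpow a x] := by
        funext i
        fin_cases i <;> simp [Equiv.swap_apply_left, Equiv.swap_apply_right]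
      rw [hvec]
    rw [← hrw x, h1, h2, h3, hFzero x]
  have hP0 : P = 0 := exp_poly_zero ht P.natDegree P le_rfl hPval
  -- derive p = 0
  have hψinj : Function.Injective ψ := by
    set φ : Polynomial ℝ →+* MvPolynomial (Fin 1) ℝ :=
      Polynomial.eval₂RingHom (MvPolynomial.C : ℝ →+* MvPolynomial (Fin 1) ℝ)
        (MvPolynomial.X 0) with hφ
    have hli : Function.LeftInverse φ ψ := by
      intro q
      have : φ.comp ψ = RingHom.id _ := by
        apply MvPolynomial.ringHom_ext
        · intro r; simp [hψ, hφ]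
        · intro i
          have : i = 0 := Subsingleton.elim i 0
          subst this
          simp [hψ, hφ]
      calc φ (ψ q) = (φ.comp ψ) q := rfl
        _ = q := by rw [this]; rfl
    exact hli.injective
  have h4 : (MvPolynomial.finSuccEquiv ℝ 1) p' = 0 := by
    have := Polynomial.map_injective ψ hψinj
    apply this
    rw [Polynomial.map_zero]
    exact hP0
  have h5 : p' = 0 := by
    have := (MvPolynomial.finSuccEquiv ℝ 1).injective
    apply this
    rw [map_zero]
    exact h4
  have h6 : p = 0 := by
    have hinj := MvPolynomial.rename_injective (R := ℝ)
      (Equiv.swap (0 : Fin 2) 1 : Fin 2 → Fin 2) (Equiv.injective _)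
    apply hinj
    rw [map_zero]
    exact h5
  exact hp0 h6
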